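/- arXiv:1103.5850 — 3 statements merged into one kernel-verified Lean document; each statement's English description precedes it below -/
import Mathlib

section
/- Let (n, X, C^k_ij, F_i) be Cartan realization data and let (M, θ, h) be a realization of it. Then the structure identities hold at every point x of the image h(M): ⁅F_i, F_j⁆(x) = −Σ_k C^k_ij(x) F_k(x), and (F_j C^i_kl + F_k C^i_lj + F_l C^i_jk)(x) = −Σ_m (C^i_mj C^m_kl + C^i_mk C^m_lj + C^i_ml C^m_jk)(x), for all indices i, j, k, l. -/
/-!
Common definitions: coframes (via their dual frames), Lie brackets of vector fields
(characterized by their action on smooth functions), invariant functions, ranks,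
Cartan realization data and realizations.
-/

open Manifold Set Filter
open scoped Topology

noncomputable section

/-- The Euclidean model space `ℝ^n`. -/
abbrev EucSp (n : ℕ) : Type := EuclideanSpace ℝ (Fin n)

/-- A vector field on `M` is smooth if the corresponding section of the tangent bundle is. -/
def SmoothVF (n : ℕ) {M : Type*} [TopologicalSpace M] [ChartedSpace (EucSp n) M]
    [IsManifold (𝓡 n) (⊤ : ℕ∞) M] (X : ∀ p : M, TangentSpace (𝓡 n) p) : Prop :=
  ContMDiff (𝓡 n) (𝓡 n).tangent (⊤ : ℕ∞) (fun p => (⟨p, X p⟩ : TangentBundle (𝓡 n) M))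

/-- The derivative of a real valued function `f` along a vector field `X`. -/
def VFDeriv (n : ℕ) {M : Type*} [TopologicalSpace M] [ChartedSpace (EucSp n) M]
    [IsManifold (𝓡 n) (⊤ : ℕ∞) M] (X : ∀ p : M, TangentSpace (𝓡 n) p)
    (f : M → ℝ) : M → ℝ :=
  fun p => mfderiv (𝓡 n) 𝓘(ℝ) f p (X p)

/-- `W = ⁅Y, Z⁆` is the Lie bracket of the vector fields `Y` and `Z`, characterized by its
action on smooth real valued functions. -/
def IsLieBracketOf (n : ℕ) {M : Type*} [TopologicalSpace M] [ChartedSpace (EucSp n) M]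
    [IsManifold (𝓡 n) (⊤ : ℕ∞) M] (Y Z W : ∀ p : M, TangentSpace (𝓡 n) p) : Prop :=
  ∀ f : M → ℝ, ContMDiff (𝓡 n) 𝓘(ℝ) (⊤ : ℕ∞) f → ∀ p : M,
    VFDeriv n Y (VFDeriv n Z f) p - VFDeriv n Z (VFDeriv n Y f) p = VFDeriv n W f p

/-- A (dual) frame on the `n`-manifold `M`: `n` smooth vector fields `X 1, …, X n` which form a
basis of every tangent space.  This is exactly the data of a coframe `θ = (θ^1, …, θ^n)`,
recorded through its dual frame, determined by `θ^i (X j) = δ^i_j`. -/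
structure IsFrame (n : ℕ) {M : Type*} [TopologicalSpace M] [ChartedSpace (EucSp n) M]
    [IsManifold (𝓡 n) (⊤ : ℕ∞) M]
    (X : Fin n → ∀ p : M, TangentSpace (𝓡 n) p) : Prop where
  smooth : ∀ i, SmoothVF n (X i)
  indep : ∀ p : M, LinearIndependent ℝ (fun i => X i p)
  span : ∀ p : M, Submodule.span ℝ (Set.range fun i => X i p) = ⊤

/-- `C` are the structure functions of the coframe with dual frame `X`:
they are smooth, skew-symmetric in the lower indices, and
`⁅X i, X j⁆ = - ∑ k, C k i j • X k` (equivalently `dθ^k = ∑_{i<j} C^k_ij θ^i ∧ θ^j`). -/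
def HasStructureFns (n : ℕ) {M : Type*} [TopologicalSpace M] [ChartedSpace (EucSp n) M]
    [IsManifold (𝓡 n) (⊤ : ℕ∞) M] (X : Fin n → ∀ p : M, TangentSpace (𝓡 n) p)
    (C : Fin n → Fin n → Fin n → M → ℝ) : Prop :=
  (∀ k i j, ContMDiff (𝓡 n) 𝓘(ℝ) (⊤ : ℕ∞) (C k i j)) ∧
  (∀ k i j p, C k i j p = - C k j i p) ∧
  (∀ i j, IsLieBracketOf n (X i) (X j) (fun p => -(∑ k, C k i j p • X k p)))

/-- `φ : U → V` is a (coframe preserving) equivalence between the coframes with dual frames `X`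
on `M` and `X'` on `M'`: a diffeomorphism from the open set `U` onto the open set `V` with
`φ*θ'^i = θ^i` (equivalently `dφ ∘ X i = X' i ∘ φ`) on `U`. -/
def IsEquivOn (n : ℕ) {M M' : Type*}
    [TopologicalSpace M] [ChartedSpace (EucSp n) M] [IsManifold (𝓡 n) (⊤ : ℕ∞) M]
    [TopologicalSpace M'] [ChartedSpace (EucSp n) M'] [IsManifold (𝓡 n) (⊤ : ℕ∞) M']
    (X : Fin n → ∀ p : M, TangentSpace (𝓡 n) p)
    (X' : Fin n → ∀ p : M', TangentSpace (𝓡 n) p)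
    (U : Set M) (V : Set M') (φ : M → M') : Prop :=
  IsOpen U ∧ IsOpen V ∧ Set.BijOn φ U V ∧ ContMDiffOn (𝓡 n) (𝓡 n) (⊤ : ℕ∞) φ U ∧
    (∃ ψ : M' → M, ContMDiffOn (𝓡 n) (𝓡 n) (⊤ : ℕ∞) ψ V ∧ Set.InvOn ψ φ U V) ∧
    ∀ i, ∀ p ∈ U, mfderiv (𝓡 n) (𝓡 n) φ p (X i p) = X' i (φ p)

/-- `f` is an invariant function of the coframe with dual frame `X`: it is smooth and
`f ∘ φ = f` for every (locally defined) self-equivalence `φ : U → V` of the coframe. -/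
def IsInvariantFn (n : ℕ) {M : Type*} [TopologicalSpace M] [ChartedSpace (EucSp n) M]
    [IsManifold (𝓡 n) (⊤ : ℕ∞) M] (X : Fin n → ∀ p : M, TangentSpace (𝓡 n) p)
    (f : M → ℝ) : Prop :=
  ContMDiff (𝓡 n) 𝓘(ℝ) (⊤ : ℕ∞) f ∧
    ∀ (U V : Set M) (φ : M → M), IsEquivOn n X X U V φ → ∀ p ∈ U, f (φ p) = f p

/-- The rank of `Inv(θ)` at `p`: the dimension of the span of `{d_p f : f ∈ Inv(θ)}` in the
cotangent space at `p`. -/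
def invRankAt (n : ℕ) {M : Type*} [TopologicalSpace M] [ChartedSpace (EucSp n) M]
    [IsManifold (𝓡 n) (⊤ : ℕ∞) M] (X : Fin n → ∀ p : M, TangentSpace (𝓡 n) p)
    (p : M) : ℕ :=
  Module.finrank ℝ (Submodule.span ℝ {ω : TangentSpace (𝓡 n) p →L[ℝ] ℝ |
    ∃ f : M → ℝ, IsInvariantFn n X f ∧ mfderiv (𝓡 n) 𝓘(ℝ) f p = ω})

/-- The coframe with dual frame `X` is fully regular of rank `d`. -/
def FullyRegular (n d : ℕ) {M : Type*} [TopologicalSpace M] [ChartedSpace (EucSp n) M]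
    [IsManifold (𝓡 n) (⊤ : ℕ∞) M]
    (X : Fin n → ∀ p : M, TangentSpace (𝓡 n) p) : Prop :=
  ∀ p : M, invRankAt n X p = d

/-- `p` and `q` are locally formally equivalent: some diffeomorphism `φ : U → V` between open
neighborhoods of `p` and `q` maps `p` to `q` and satisfies `f ∘ φ = f` on `U` for every
invariant function `f` of the coframe. -/
def LocFormallyEquiv (n : ℕ) {M : Type*} [TopologicalSpace M] [ChartedSpace (EucSp n) M]
    [IsManifold (𝓡 n) (⊤ : ℕ∞) M] (X : Fin n → ∀ p : M, TangentSpace (𝓡 n) p)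
    (p q : M) : Prop :=
  ∃ (U V : Set M) (φ : M → M), IsOpen U ∧ IsOpen V ∧ p ∈ U ∧ q ∈ V ∧ Set.BijOn φ U V ∧
    ContMDiffOn (𝓡 n) (𝓡 n) (⊤ : ℕ∞) φ U ∧
    (∃ ψ : M → M, ContMDiffOn (𝓡 n) (𝓡 n) (⊤ : ℕ∞) ψ V ∧ Set.InvOn ψ φ U V) ∧
    φ p = q ∧ ∀ f : M → ℝ, IsInvariantFn n X f → ∀ p' ∈ U, f (φ p') = f p'

/-- Cartan realization data `(n, X', C, F)`: smooth functions `C k i j ∈ C^∞(X')`,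
skew-symmetric in `i, j`, and smooth vector fields `F i` on `X'`. -/
def IsCartanData (n d : ℕ) {X' : Type*} [TopologicalSpace X'] [ChartedSpace (EucSp d) X']
    [IsManifold (𝓡 d) (⊤ : ℕ∞) X'] (C : Fin n → Fin n → Fin n → X' → ℝ)
    (F : Fin n → ∀ x : X', TangentSpace (𝓡 d) x) : Prop :=
  (∀ k i j, ContMDiff (𝓡 d) 𝓘(ℝ) (⊤ : ℕ∞) (C k i j)) ∧
  (∀ k i j x, C k i j x = - C k j i x) ∧
  (∀ i, SmoothVF d (F i))

/-- The structure identities of Cartan realization data at the point `x`: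
`⁅F i, F j⁆ (x) = - ∑ k, C k i j x • F k x` (expressed through the action on smooth functions)
and the differential identity for the structure functions. -/
def StructureIdentitiesAt (n d : ℕ) {X' : Type*} [TopologicalSpace X']
    [ChartedSpace (EucSp d) X'] [IsManifold (𝓡 d) (⊤ : ℕ∞) X']
    (C : Fin n → Fin n → Fin n → X' → ℝ)
    (F : Fin n → ∀ x : X', TangentSpace (𝓡 d) x) (x : X') : Prop :=
  (∀ i j, ∀ g : X' → ℝ, ContMDiff (𝓡 d) 𝓘(ℝ) (⊤ : ℕ∞) g →
    VFDeriv d (F i) (VFDeriv d (F j) g) x - VFDeriv d (F j) (VFDeriv d (F i) g) x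
      = -∑ k, C k i j x * VFDeriv d (F k) g x) ∧
  (∀ i j k l,
    VFDeriv d (F j) (C i k l) x + VFDeriv d (F k) (C i l j) x + VFDeriv d (F l) (C i j k) x
      = -∑ m, (C i m j x * C m k l x + C i m k x * C m l j x + C i m l x * C m j k x))

/-- `(M, θ, h)` (with `Xf` the dual frame of the coframe `θ`) is a realization of the Cartan
realization data `(n, X', C, F)`: `h` is smooth, `⁅X i, X j⁆ = - ∑ k, (C k i j ∘ h) • X k`
(equivalently `dθ^k = ∑_{i<j} (C^k_ij ∘ h) θ^i ∧ θ^j`), and `dh ∘ X i = F i ∘ h`. -/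
def IsRealization (n d : ℕ) {M : Type*} [TopologicalSpace M] [ChartedSpace (EucSp n) M]
    [IsManifold (𝓡 n) (⊤ : ℕ∞) M] {X' : Type*} [TopologicalSpace X']
    [ChartedSpace (EucSp d) X'] [IsManifold (𝓡 d) (⊤ : ℕ∞) X']
    (Xf : Fin n → ∀ p : M, TangentSpace (𝓡 n) p)
    (C : Fin n → Fin n → Fin n → X' → ℝ)
    (F : Fin n → ∀ x : X', TangentSpace (𝓡 d) x)
    (h : M → X') : Prop :=
  ContMDiff (𝓡 n) (𝓡 d) (⊤ : ℕ∞) h ∧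
  (∀ i j, IsLieBracketOf n (Xf i) (Xf j) (fun p => -(∑ k, C k i j (h p) • Xf k p))) ∧
  (∀ i, ∀ p : M, mfderiv (𝓡 n) (𝓡 d) h p (Xf i p) = F i (h p))

lemma hasMFDerivAt_finset_sum {n : ℕ} {M : Type*} [TopologicalSpace M]
    [ChartedSpace (EucSp n) M] [IsManifold (𝓡 n) (⊤ : ℕ∞) M]
    {ι : Type*} (s : Finset ι) (g : ι → M → ℝ) {p : M}
    (g' : ι → TangentSpace (𝓡 n) p →L[ℝ] ℝ)
    (hg : ∀ i ∈ s, HasMFDerivAt (𝓡 n) 𝓘(ℝ) (g i) p (g' i)) :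
    HasMFDerivAt (𝓡 n) 𝓘(ℝ) (fun q => ∑ i ∈ s, g i q) p (∑ i ∈ s, g' i) := by
  classical
  induction s using Finset.induction with
  | empty => exact hasMFDerivAt_const (c := (0:ℝ)) (x := p) (I := 𝓡 n) (I' := 𝓘(ℝ))
  | @insert a s ha ih =>
      have := (hg a (Finset.mem_insert_self a s)).add
        (ih fun i hi => hg i (Finset.mem_insert_of_mem hi))
      have hfun : (fun q => ∑ i ∈ insert a s, g i q) = (g a + fun q => ∑ i ∈ s, g i q) :=
        funext fun q => by simp [Finset.sum_insert ha]
      rw [hfun, Finset.sum_insert ha]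
      exact this.congr_mfderiv (Finset.sum_insert ha).symm

-- pointwise linearity of VFDeriv in the vector field slot


lemma vfderiv_neg_sum_smul {n : ℕ} {M : Type*} [TopologicalSpace M]
    [ChartedSpace (EucSp n) M] [IsManifold (𝓡 n) (⊤ : ℕ∞) M] (c : Fin n → M → ℝ) (Xf : Fin n → ∀ p : M, TangentSpace (𝓡 n) p)
    (f : M → ℝ) (q : M) :
    VFDeriv n (fun p => -(∑ k, c k p • Xf k p)) f q
      = -∑ k, c k q * VFDeriv n (Xf k) f q := by
  show mfderiv (𝓡 n) 𝓘(ℝ) f q (-(∑ k, c k q • Xf k q)) = _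
  rw [map_neg, map_sum]
  congr 1
  refine Finset.sum_congr rfl fun k _ => ?_
  rw [(mfderiv (𝓡 n) 𝓘(ℝ) f q).map_smul]
  rfl


lemma contMDiff_snd_tangent :
    ContMDiff 𝓘(ℝ, ℝ).tangent 𝓘(ℝ) (⊤ : ℕ∞) (fun z : TangentBundle 𝓘(ℝ) ℝ => (show ℝ from z.2)) := by
  rw [contMDiff_iff]
  constructor
  · have h1 : Continuous (fun q : ModelProd ℝ ℝ => q.2) := continuous_snd
    exact h1.comp (tangentBundleModelSpaceHomeomorph 𝓘(ℝ)).continuous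
  · intro x y
    refine (contDiff_snd.contDiffOn).congr ?_
    intro q hq
    simp only [mfld_simps, Function.comp]
    rw [tangentBundle_model_space_coe_chartAt_symm]
    rfl


lemma smooth_vfderiv {n : ℕ} {M : Type*} [TopologicalSpace M] [ChartedSpace (EucSp n) M]
    [IsManifold (𝓡 n) (⊤ : ℕ∞) M] {V : ∀ p : M, TangentSpace (𝓡 n) p}
    (hV : SmoothVF n V) {f : M → ℝ} (hf : ContMDiff (𝓡 n) 𝓘(ℝ) (⊤ : ℕ∞) f) :
    ContMDiff (𝓡 n) 𝓘(ℝ) (⊤ : ℕ∞) (VFDeriv n V f) := by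
  have h1 : ContMDiff (𝓡 n) 𝓘(ℝ,ℝ).tangent (⊤ : ℕ∞)
      (fun p => tangentMap (𝓡 n) 𝓘(ℝ) f (⟨p, V p⟩ : TangentBundle (𝓡 n) M)) :=
    (hf.contMDiff_tangentMap (by simp)).comp hV
  exact contMDiff_snd_tangent.comp h1


lemma exists_smooth_with_mfderiv {n : ℕ} {M : Type*} [TopologicalSpace M]
    [ChartedSpace (EucSp n) M] [IsManifold (𝓡 n) (⊤ : ℕ∞) M] [T2Space M]
    (p : M) (ω : TangentSpace (𝓡 n) p →L[ℝ] ℝ) :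
    ∃ f : M → ℝ, ContMDiff (𝓡 n) 𝓘(ℝ) (⊤ : ℕ∞) f ∧ mfderiv (𝓡 n) 𝓘(ℝ) f p = ω := by
  obtain ⟨bump⟩ : Nonempty (SmoothBumpFunction (𝓡 n) p) := inferInstance
  let ω' : EucSp n →L[ℝ] ℝ := ω
  refine ⟨fun q => bump q • ω' (extChartAt (𝓡 n) p q), ?_, ?_⟩
  · exact bump.contMDiff_smul (ω'.contMDiff.comp_contMDiffOn (contMDiffOn_extChartAt))
  · have heq : (fun q => bump q • ω' (extChartAt (𝓡 n) p q)) =ᶠ[𝓝 p]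
        fun q => ω' (extChartAt (𝓡 n) p q) := by
      filter_upwards [bump.eventuallyEq_one] with q hq
      rw [show bump q = 1 from hq, one_smul]
    rw [heq.mfderiv_eq]
    have h2 : HasMFDerivAt (𝓡 n) 𝓘(ℝ) (fun q => ω' (extChartAt (𝓡 n) p q)) p
        (ω'.comp (mfderiv (𝓡 n) (𝓡 n) (chartAt (EucSp n) p) p)) :=
      (ω'.hasMFDerivAt).comp p (hasMFDerivAt_extChartAt (mem_chart_source _ p))
    have h3 : mfderiv (𝓡 n) (𝓡 n) (chartAt (EucSp n) p) p
        = ContinuousLinearMap.id ℝ (EucSp n) := by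
      rw [mfderiv_chartAt_eq_tangentCoordChange (mem_chart_source _ p)]
      refine ContinuousLinearMap.ext fun v => ?_
      exact tangentCoordChange_self (I := 𝓡 n) (mem_extChartAt_source p)
    rw [h2.mfderiv, h3]; exact ContinuousLinearMap.comp_id ω


lemma cyclic_identity {n : ℕ} {M : Type*} [TopologicalSpace M] [ChartedSpace (EucSp n) M]
    [IsManifold (𝓡 n) (⊤ : ℕ∞) M] [T2Space M]
    {Xf : Fin n → ∀ p : M, TangentSpace (𝓡 n) p} (hfr : IsFrame n Xf)
    {c : Fin n → Fin n → Fin n → M → ℝ} (hc : ∀ k i j, ContMDiff (𝓡 n) 𝓘(ℝ) (⊤ : ℕ∞) (c k i j))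
    (hbr : ∀ i j, IsLieBracketOf n (Xf i) (Xf j) (fun p => -(∑ k, c k i j p • Xf k p)))
    (i j k l : Fin n) (p : M) :
    VFDeriv n (Xf j) (c i k l) p + VFDeriv n (Xf k) (c i l j) p + VFDeriv n (Xf l) (c i j k) p
      = ∑ m, (c m k l p * c i j m p + c m l j p * c i k m p + c m j k p * c i l m p) := by
  classical
  -- pointwise bracket formula
  have hbr' : ∀ (a b : Fin n) (f : M → ℝ), ContMDiff (𝓡 n) 𝓘(ℝ) (⊤ : ℕ∞) f → ∀ q : M,
      VFDeriv n (Xf a) (VFDeriv n (Xf b) f) q - VFDeriv n (Xf b) (VFDeriv n (Xf a) f) q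
        = -∑ m, c m a b q * VFDeriv n (Xf m) f q := by
    intro a b f hf q
    rw [hbr a b f hf q, vfderiv_neg_sum_smul]
  have hsm : ∀ (a : Fin n) (f : M → ℝ), ContMDiff (𝓡 n) 𝓘(ℝ) (⊤ : ℕ∞) f →
      ContMDiff (𝓡 n) 𝓘(ℝ) (⊤ : ℕ∞) (VFDeriv n (Xf a) f) :=
    fun a f hf => smooth_vfderiv (hfr.smooth a) hf
  -- the test function from the dual frame
  haveI : FiniteDimensional ℝ (TangentSpace (𝓡 n) p) :=
    (inferInstance : FiniteDimensional ℝ (EucSp n))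
  haveI : T2Space (TangentSpace (𝓡 n) p) := (inferInstance : T2Space (EucSp n))
  let b : Module.Basis (Fin n) ℝ (TangentSpace (𝓡 n) p) :=
    Module.Basis.mk (hfr.indep p) (by rw [hfr.span p])
  obtain ⟨f, hf, hfd⟩ := exists_smooth_with_mfderiv (M := M) p
    (LinearMap.toContinuousLinearMap (b.coord i))
  have hdelta : ∀ m, VFDeriv n (Xf m) f p = if m = i then 1 else 0 := by
    intro m
    show mfderiv (𝓡 n) 𝓘(ℝ) f p (Xf m p) = _
    rw [hfd]
    show b.coord i (Xf m p) = _
    rw [show Xf m p = b m from (Module.Basis.mk_apply (hfr.indep p) _ m).symm,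
      Module.Basis.coord_apply, Module.Basis.repr_self]
    exact Finsupp.single_apply
  -- derivative of the bracket right-hand side
  have hder : ∀ (a b' e : Fin n),
      VFDeriv n (Xf a) (fun q => -∑ m, c m b' e q * VFDeriv n (Xf m) f q) p
        = -∑ m, (c m b' e p * VFDeriv n (Xf a) (VFDeriv n (Xf m) f) p
            + VFDeriv n (Xf m) f p * VFDeriv n (Xf a) (c m b' e) p) := by
    intro a b' e
    let A : Fin n → (TangentSpace (𝓡 n) p →L[ℝ] ℝ) :=
      fun m => mfderiv (𝓡 n) 𝓘(ℝ) (VFDeriv n (Xf m) f) p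
    let B : Fin n → (TangentSpace (𝓡 n) p →L[ℝ] ℝ) :=
      fun m => mfderiv (𝓡 n) 𝓘(ℝ) (c m b' e) p
    have H : HasMFDerivAt (𝓡 n) 𝓘(ℝ) (fun q => -∑ m, c m b' e q * VFDeriv n (Xf m) f q) p
        (-(∑ m, (c m b' e p • A m + VFDeriv n (Xf m) f p • B m))) := by
      apply HasMFDerivAt.neg
      apply hasMFDerivAt_finset_sum
      intro m _
      exact ((hc m b' e).mdifferentiableAt (by simp)).hasMFDerivAt.mul
        ((hsm m f hf).mdifferentiableAt (by simp)).hasMFDerivAt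
    show mfderiv (𝓡 n) 𝓘(ℝ) _ p (Xf a p) = _
    have eval : (-(∑ m, (c m b' e p • A m + VFDeriv n (Xf m) f p • B m)) :
        TangentSpace (𝓡 n) p →L[ℝ] ℝ) (Xf a p)
        = -∑ m, (c m b' e p * A m (Xf a p) + VFDeriv n (Xf m) f p * B m (Xf a p)) := by
      simp
    rw [H.mfderiv]
    exact eval
  -- difference rule
  have hsub : ∀ (u v : M → ℝ), ContMDiff (𝓡 n) 𝓘(ℝ) (⊤ : ℕ∞) u → ContMDiff (𝓡 n) 𝓘(ℝ) (⊤ : ℕ∞) v →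
      ∀ (a : Fin n) (q : M), VFDeriv n (Xf a) (fun q' => u q' - v q') q
        = VFDeriv n (Xf a) u q - VFDeriv n (Xf a) v q := by
    intro u v hu hv a q
    show mfderiv (𝓡 n) 𝓘(ℝ) (u - v) q (Xf a q) = _
    rw [((hu.mdifferentiableAt (by simp)).hasMFDerivAt.sub
      (hv.mdifferentiableAt (by simp)).hasMFDerivAt).mfderiv]
    rfl
  -- the combined identity for one cyclic slot
  have hS : ∀ (a b' e : Fin n),
      VFDeriv n (Xf a) (VFDeriv n (Xf b') (VFDeriv n (Xf e) f)) p
        - VFDeriv n (Xf a) (VFDeriv n (Xf e) (VFDeriv n (Xf b') f)) p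
        - (VFDeriv n (Xf b') (VFDeriv n (Xf e) (VFDeriv n (Xf a) f)) p
           - VFDeriv n (Xf e) (VFDeriv n (Xf b') (VFDeriv n (Xf a) f)) p)
        = -VFDeriv n (Xf a) (c i b' e) p + ∑ m, c m b' e p * c i a m p := by
    intro a b' e
    have h1 : (fun q => VFDeriv n (Xf b') (VFDeriv n (Xf e) f) q
        - VFDeriv n (Xf e) (VFDeriv n (Xf b') f) q)
        = fun q => -∑ m, c m b' e q * VFDeriv n (Xf m) f q :=
      funext fun q => hbr' b' e f hf q
    have h2 : VFDeriv n (Xf a) (VFDeriv n (Xf b') (VFDeriv n (Xf e) f)) p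
        - VFDeriv n (Xf a) (VFDeriv n (Xf e) (VFDeriv n (Xf b') f)) p
        = VFDeriv n (Xf a) (fun q => -∑ m, c m b' e q * VFDeriv n (Xf m) f q) p := by
      rw [← h1]
      exact (hsub _ _ (hsm b' _ (hsm e f hf)) (hsm e _ (hsm b' f hf)) a p).symm
    have h3 : VFDeriv n (Xf b') (VFDeriv n (Xf e) (VFDeriv n (Xf a) f)) p
        - VFDeriv n (Xf e) (VFDeriv n (Xf b') (VFDeriv n (Xf a) f)) p
        = -∑ m, c m b' e p * VFDeriv n (Xf m) (VFDeriv n (Xf a) f) p :=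
      hbr' b' e _ (hsm a f hf) p
    rw [h2, h3, hder a b' e]
    -- use the bracket once more to swap second derivatives, and collapse deltas
    have h4 : ∀ m, VFDeriv n (Xf a) (VFDeriv n (Xf m) f) p
        = VFDeriv n (Xf m) (VFDeriv n (Xf a) f) p - ∑ r, c r a m p * VFDeriv n (Xf r) f p := by
      intro m
      have := hbr' a m f hf p
      linarith [this]
    have h5 : ∀ m, (∑ r, c r a m p * VFDeriv n (Xf r) f p) = c i a m p := by
      intro m
      simp [hdelta, mul_ite, Finset.sum_ite_eq']
    have h6 : ∀ m, VFDeriv n (Xf m) f p * VFDeriv n (Xf a) (c m b' e) p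
        = if m = i then VFDeriv n (Xf a) (c m b' e) p else 0 := by
      intro m; rw [hdelta m]; split <;> simp
    simp only [h4, h5, h6]
    simp only [mul_sub]
    rw [Finset.sum_add_distrib, Finset.sum_sub_distrib, Finset.sum_ite_eq' Finset.univ i]
    simp only [Finset.mem_univ, if_true]
    ring
  -- Jacobi identity: cyclic sum of the left sides vanishes
  have jac := hS j k l
  have jac2 := hS k l j
  have jac3 := hS l j k
  have hzero : (-VFDeriv n (Xf j) (c i k l) p + ∑ m, c m k l p * c i j m p)
      + (-VFDeriv n (Xf k) (c i l j) p + ∑ m, c m l j p * c i k m p)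
      + (-VFDeriv n (Xf l) (c i j k) p + ∑ m, c m j k p * c i l m p) = 0 := by
    rw [← jac, ← jac2, ← jac3]; ring
  have hsplit : ∑ m, (c m k l p * c i j m p + c m l j p * c i k m p + c m j k p * c i l m p)
      = (∑ m, c m k l p * c i j m p) + (∑ m, c m l j p * c i k m p)
        + (∑ m, c m j k p * c i l m p) := by
    rw [Finset.sum_add_distrib, Finset.sum_add_distrib]
  rw [hsplit]
  linarith [hzero]


/-- if `(M, θ, h)` is a realization of Cartan realization data `(n, X', C, F)`,
then the structure identities hold at every point of the image `h(M)`. -/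
theorem realization_implies_structure_identities
    (n d : ℕ) {M : Type*} [TopologicalSpace M] [ChartedSpace (EucSp n) M]
    [IsManifold (𝓡 n) (⊤ : ℕ∞) M] [T2Space M]
    {X' : Type*} [TopologicalSpace X'] [ChartedSpace (EucSp d) X']
    [IsManifold (𝓡 d) (⊤ : ℕ∞) X'] [T2Space X']
    (C : Fin n → Fin n → Fin n → X' → ℝ) (F : Fin n → ∀ x : X', TangentSpace (𝓡 d) x)
    (hdata : IsCartanData n d C F)
    (Xf : Fin n → ∀ p : M, TangentSpace (𝓡 n) p) (h : M → X')
    (hfr : IsFrame n Xf) (hreal : IsRealization n d Xf C F h) :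
    ∀ x ∈ Set.range h, StructureIdentitiesAt n d C F x := by
  obtain ⟨hh, hbrM, hdh⟩ := hreal
  obtain ⟨hC, hCskew, hF⟩ := hdata
  rintro x ⟨p, rfl⟩
  -- pullback of derivatives along h
  have hpull : ∀ (a : Fin n) (g : X' → ℝ), ContMDiff (𝓡 d) 𝓘(ℝ) (⊤ : ℕ∞) g → ∀ q : M,
      VFDeriv d (F a) g (h q) = VFDeriv n (Xf a) (g ∘ h) q := by
    intro a g hg q
    show mfderiv (𝓡 d) 𝓘(ℝ) g (h q) (F a (h q)) = mfderiv (𝓡 n) 𝓘(ℝ) (g ∘ h) q (Xf a q)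
    rw [mfderiv_comp q (hg.mdifferentiableAt (by simp)) (hh.mdifferentiableAt (by simp))]
    show mfderiv (𝓡 d) 𝓘(ℝ) g (h q) (F a (h q))
      = mfderiv (𝓡 d) 𝓘(ℝ) g (h q) (mfderiv (𝓡 n) (𝓡 d) h q (Xf a q))
    rw [hdh a q]
  constructor
  · -- first structure identity
    intro i j g hg
    have e2 : (VFDeriv d (F j) g) ∘ h = VFDeriv n (Xf j) (g ∘ h) :=
      funext fun q => hpull j g hg q
    have e2' : (VFDeriv d (F i) g) ∘ h = VFDeriv n (Xf i) (g ∘ h) :=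
      funext fun q => hpull i g hg q
    have l1 : VFDeriv d (F i) (VFDeriv d (F j) g) (h p)
        = VFDeriv n (Xf i) (VFDeriv n (Xf j) (g ∘ h)) p := by
      rw [hpull i _ (smooth_vfderiv (hF j) hg) p, e2]
    have l2 : VFDeriv d (F j) (VFDeriv d (F i) g) (h p)
        = VFDeriv n (Xf j) (VFDeriv n (Xf i) (g ∘ h)) p := by
      rw [hpull j _ (smooth_vfderiv (hF i) hg) p, e2']
    rw [l1, l2, hbrM i j (g ∘ h) (hg.comp hh) p,
      vfderiv_neg_sum_smul (fun k q => C k i j (h q)) Xf (g ∘ h) p]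
    congr 1
    refine Finset.sum_congr rfl fun k _ => ?_
    rw [hpull k g hg p]
  · -- second structure identity
    intro i j k l
    have key := cyclic_identity (c := fun a b e q => C a b e (h q)) hfr
      (fun a b e => (hC a b e).comp hh) (fun a b => hbrM a b) i j k l p
    have t1 : VFDeriv d (F j) (C i k l) (h p) = VFDeriv n (Xf j) ((C i k l) ∘ h) p :=
      hpull j _ (hC i k l) p
    have t2 : VFDeriv d (F k) (C i l j) (h p) = VFDeriv n (Xf k) ((C i l j) ∘ h) p :=
      hpull k _ (hC i l j) p
    have t3 : VFDeriv d (F l) (C i j k) (h p) = VFDeriv n (Xf l) ((C i j k) ∘ h) p :=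
      hpull l _ (hC i j k) p
    rw [t1, t2, t3]
    have hterm : ∀ m : Fin n,
        C m k l (h p) * C i j m (h p) + C m l j (h p) * C i k m (h p)
          + C m j k (h p) * C i l m (h p)
        = -(C i m j (h p) * C m k l (h p) + C i m k (h p) * C m l j (h p)
            + C i m l (h p) * C m j k (h p)) := by
      intro m
      rw [hCskew i j m, hCskew i k m, hCskew i l m]
      ring
    calc VFDeriv n (Xf j) ((C i k l) ∘ h) p + VFDeriv n (Xf k) ((C i l j) ∘ h) p
          + VFDeriv n (Xf l) ((C i j k) ∘ h) p
        = ∑ m, (C m k l (h p) * C i j m (h p) + C m l j (h p) * C i k m (h p)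
            + C m j k (h p) * C i l m (h p)) := key
      _ = ∑ m, -(C i m j (h p) * C m k l (h p) + C i m k (h p) * C m l j (h p)
            + C i m l (h p) * C m j k (h p)) := Finset.sum_congr rfl fun m _ => hterm m
      _ = -∑ m, (C i m j (h p) * C m k l (h p) + C i m k (h p) * C m l j (h p)
            + C i m l (h p) * C m j k (h p)) := by rw [Finset.sum_neg_distrib]
end
end

section
/- Let M be a connected smooth n-manifold and θ a coframe on M with dual frame (X_1,…,X_n). The set g of infinitesimal symmetries of θ (smooth vector fields Y on M with ⁅Y, X_i⁆ = 0 for all i) is a real vector subspace of the space of smooth vector fields on M, and for every p ∈ M the evaluation map g → T_pM, Y ↦ Y(p), is injective; in particular g is finite-dimensional of dimension at most n. -/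
/-!
Common definitions: coframes (via their dual frames), Lie brackets of vector fields
(characterized by their action on smooth functions), invariant functions, ranks,
Cartan realization data and realizations.
-/

open Manifold Set Filter
open scoped Topology

noncomputable section

section AuxiliaryLemmas
open Metric
set_option maxHeartbeats 1000000

theorem tb_snd_smooth : ContMDiff 𝓘(ℝ).tangent 𝓘(ℝ) (⊤ : ℕ∞) (fun z : TangentBundle 𝓘(ℝ) ℝ => z.2) := by
  refine contMDiff_iff.2 ⟨?_, ?_⟩
  · exact continuous_snd.comp (tangentBundleModelSpaceHomeomorph 𝓘(ℝ)).continuous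
  intro x y
  simp only [mfld_simps]
  exact contDiff_snd.contDiffOn

variable {n : ℕ} {M : Type*} [TopologicalSpace M] [ChartedSpace (EucSp n) M]
    [IsManifold (𝓡 n) (⊤ : ℕ∞) M]

theorem contMDiff_vfderiv {Y : ∀ p : M, TangentSpace (𝓡 n) p}
    (hY : SmoothVF n Y) {f : M → ℝ} (hf : ContMDiff (𝓡 n) 𝓘(ℝ) (⊤ : ℕ∞) f) :
    ContMDiff (𝓡 n) 𝓘(ℝ) (⊤ : ℕ∞) (VFDeriv n Y f) := by
  have htm : ContMDiff (𝓡 n).tangent 𝓘(ℝ).tangent (⊤ : ℕ∞) (tangentMap (𝓡 n) 𝓘(ℝ) f) :=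
    hf.contMDiff_tangentMap (le_of_eq rfl)
  have : ContMDiff (𝓡 n) 𝓘(ℝ) (⊤ : ℕ∞)
      (fun p => (tangentMap (𝓡 n) 𝓘(ℝ) f (⟨p, Y p⟩ : TangentBundle (𝓡 n) M)).2) :=
    tb_snd_smooth.comp (htm.comp hY)
  exact this

/-- The bump-localized coordinate functions. -/
def bumpFn [T2Space M] {q0 : M} (γ : SmoothBumpFunction (𝓡 n) q0)
    (ℓ : EucSp n →L[ℝ] ℝ) : M → ℝ :=
  fun q => γ q • ℓ (chartAt (EucSp n) q0 q)

theorem bumpFn_smooth [T2Space M] {q0 : M} (γ : SmoothBumpFunction (𝓡 n) q0)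
    (ℓ : EucSp n →L[ℝ] ℝ) : ContMDiff (𝓡 n) 𝓘(ℝ) (⊤ : ℕ∞) (bumpFn γ ℓ) :=
  γ.contMDiff_smul (ℓ.contMDiff.comp_contMDiffOn contMDiffOn_chart)

theorem vfderiv_bumpFn [T2Space M] {q0 : M} (γ : SmoothBumpFunction (𝓡 n) q0)
    (ℓ : EucSp n →L[ℝ] ℝ) (W : ∀ p : M, TangentSpace (𝓡 n) p) {q : M}
    (hq1 : ∀ᶠ q' in 𝓝 q, γ q' = 1) (hq2 : q ∈ (chartAt (EucSp n) q0).source) :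
    VFDeriv n W (bumpFn γ ℓ) q
      = ℓ (mfderiv (𝓡 n) (𝓡 n) (chartAt (EucSp n) q0) q (W q)) := by
  have hc : HasMFDerivAt (𝓡 n) (𝓡 n) (chartAt (EucSp n) q0) q
      (mfderiv (𝓡 n) (𝓡 n) (chartAt (EucSp n) q0) q) :=
    ((mdifferentiable_chart q0).mdifferentiableAt hq2).hasMFDerivAt
  have hcomp : HasMFDerivAt (𝓡 n) 𝓘(ℝ) (fun q' => ℓ (chartAt (EucSp n) q0 q')) q
      (ℓ.comp (mfderiv (𝓡 n) (𝓡 n) (chartAt (EucSp n) q0) q)) :=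
    ℓ.hasMFDerivAt.comp q hc
  have heq : bumpFn γ ℓ =ᶠ[𝓝 q] fun q' => ℓ (chartAt (EucSp n) q0 q') := by
    filter_upwards [hq1] with q' h1
    simp [bumpFn, h1]
  have : mfderiv (𝓡 n) 𝓘(ℝ) (bumpFn γ ℓ) q
      = ℓ.comp (mfderiv (𝓡 n) (𝓡 n) (chartAt (EucSp n) q0) q) := by
    rw [heq.mfderiv_eq]
    exact hcomp.mfderiv
  show mfderiv (𝓡 n) 𝓘(ℝ) (bumpFn γ ℓ) q (W q) = _
  rw [this]
  rfl

theorem vfderiv2_bumpFn [T2Space M] {q0 : M} (γ : SmoothBumpFunction (𝓡 n) q0)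
    (ℓ : EucSp n →L[ℝ] ℝ) (Z : ∀ p : M, TangentSpace (𝓡 n) p) (zh : EucSp n → EucSp n)
    {V : Set M} (hVopen : IsOpen V) (hVγ : ∀ q ∈ V, γ q = 1)
    (hVsrc : V ⊆ (chartAt (EucSp n) q0).source)
    (hrep : ∀ q' ∈ V, (mfderiv (𝓡 n) (𝓡 n) (chartAt (EucSp n) q0) q' (Z q') : EucSp n)
      = zh (chartAt (EucSp n) q0 q'))
    {q : M} (hq : q ∈ V) (hzh : DifferentiableAt ℝ zh (chartAt (EucSp n) q0 q))
    (W : ∀ p : M, TangentSpace (𝓡 n) p) :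
    VFDeriv n W (VFDeriv n Z (bumpFn γ ℓ)) q
      = ℓ (fderiv ℝ zh (chartAt (EucSp n) q0 q)
          (mfderiv (𝓡 n) (𝓡 n) (chartAt (EucSp n) q0) q (W q))) := by
  set c := chartAt (EucSp n) q0 with hcdef
  have hVev : ∀ q' ∈ V, VFDeriv n Z (bumpFn γ ℓ) q' = ℓ (zh (c q')) := by
    intro q' hq'
    have h1 : ∀ᶠ q'' in 𝓝 q', γ q'' = 1 :=
      eventually_of_mem (hVopen.mem_nhds hq') hVγ
    rw [vfderiv_bumpFn γ ℓ Z h1 (hVsrc hq')]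
    rw [hrep q' hq']
  have heq : VFDeriv n Z (bumpFn γ ℓ) =ᶠ[𝓝 q] fun q' => ℓ (zh (c q')) :=
    eventually_of_mem (hVopen.mem_nhds hq) hVev
  have hc : HasMFDerivAt (𝓡 n) (𝓡 n) c q (mfderiv (𝓡 n) (𝓡 n) c q) :=
    ((mdifferentiable_chart q0).mdifferentiableAt (hVsrc hq)).hasMFDerivAt
  have hzc : HasMFDerivAt (𝓡 n) (𝓡 n) (fun q' => zh (c q')) q
      ((fderiv ℝ zh (c q)).comp (mfderiv (𝓡 n) (𝓡 n) c q)) :=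
    (hzh.hasFDerivAt.hasMFDerivAt).comp q hc
  have hfull : HasMFDerivAt (𝓡 n) 𝓘(ℝ) (fun q' => ℓ (zh (c q'))) q
      (ℓ.comp ((fderiv ℝ zh (c q)).comp (mfderiv (𝓡 n) (𝓡 n) c q))) :=
    ℓ.hasMFDerivAt.comp q hzc
  show mfderiv (𝓡 n) 𝓘(ℝ) (VFDeriv n Z (bumpFn γ ℓ)) q (W q) = _
  rw [heq.mfderiv_eq, hfull.mfderiv]
  rfl

/-- If a C¹ map `y` satisfies `Dy·(ξᵢ) = Dξᵢ·y` for a family of vector fields spanning at `x0`,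
and `y x0 = 0`, then `y` vanishes near `x0`. -/
theorem gronwall_vanish {E : Type*} [NormedAddCommGroup E] [NormedSpace ℝ E]
    [FiniteDimensional ℝ E] {m : ℕ} (xi : Fin m → E → E) (y : E → E) (s : Set E)
    (hs : IsOpen s) {x0 : E} (hx0 : x0 ∈ s)
    (hy : ContDiffOn ℝ ((⊤ : ℕ∞) : WithTop ℕ∞) y s)
    (hxi : ∀ i, ContDiffOn ℝ ((⊤ : ℕ∞) : WithTop ℕ∞) (xi i) s)
    (hpde : ∀ i, ∀ x ∈ s, fderiv ℝ y x (xi i x) = fderiv ℝ (xi i) x (y x))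
    (hspan : Submodule.span ℝ (Set.range fun i => xi i x0) = ⊤)
    (hy0 : y x0 = 0) : ∀ᶠ x in 𝓝 x0, y x = 0 := by
  classical
  -- the "frame assembly" map
  set T : E → ((Fin m → ℝ) →L[ℝ] E) := fun x =>
    ∑ i, ContinuousLinearMap.smulRightL ℝ (Fin m → ℝ) E (ContinuousLinearMap.proj i) (xi i x)
    with hT
  have hTapply : ∀ x c, T x c = ∑ i, c i • xi i x := by
    intro x c
    simp [hT, ContinuousLinearMap.sum_apply, ContinuousLinearMap.smulRightL]
  -- T x0 is surjective
  have hTsurj : Function.Surjective (T x0) := by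
    have hr : LinearMap.range ((T x0) : (Fin m → ℝ) →ₗ[ℝ] E) = ⊤ := by
      rw [← top_le_iff, ← hspan, Submodule.span_le]
      rintro - ⟨i, rfl⟩
      exact ⟨Pi.single i 1, by simp [hTapply, Pi.single_apply, ite_smul]⟩
    exact LinearMap.range_eq_top.mp hr
  -- linear right inverse, continuous by finite-dimensionality
  obtain ⟨Rlin, hR⟩ := ((T x0) : (Fin m → ℝ) →ₗ[ℝ] E).exists_rightInverse_of_surjective
    (LinearMap.range_eq_top.mpr hTsurj)
  set R : E →L[ℝ] (Fin m → ℝ) := LinearMap.toContinuousLinearMap Rlin with hRdef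
  have hTR : ∀ v, T x0 (R v) = v := fun v => congrArg (fun g => g v) hR
  -- the conjugated map
  set Φ : E → (E →L[ℝ] E) := fun x => (T x).comp R with hΦ
  have hΦ0 : Φ x0 = ContinuousLinearMap.id ℝ E := by
    ext v; exact hTR v
  -- continuity of Φ on s
  have hTcont : ContinuousOn T s := by
    apply continuousOn_finset_sum
    intro i _
    exact (ContinuousLinearMap.smulRightL ℝ (Fin m → ℝ) E
      (ContinuousLinearMap.proj i)).continuous.comp_continuousOn ((hxi i).continuousOn)
  have hΦcont : ContinuousOn Φ s :=
    hTcont.clm_comp continuousOn_const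
  -- choose a radius on which `Φ` is close to the identity and `s` contains the ball
  have hΦat : ContinuousAt Φ x0 := hΦcont.continuousAt (hs.mem_nhds hx0)
  have hev : ∀ᶠ x in 𝓝 x0, ‖Φ x - ContinuousLinearMap.id ℝ E‖ < 1/2 := by
    have h2 := Metric.tendsto_nhds.mp hΦat (1/2) (by norm_num)
    filter_upwards [h2] with x hx
    rw [dist_eq_norm, hΦ0] at hx
    exact hx
  obtain ⟨r0, hr0pos, hball⟩ := Metric.mem_nhds_iff.mp
    (Filter.inter_mem (hs.mem_nhds hx0) hev)
  set r : ℝ := r0/2 with hrdef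
  have hrpos : 0 < r := by positivity
  have hcb : closedBall x0 r ⊆ ball x0 r0 := by
    apply closedBall_subset_ball; rw [hrdef]; linarith
  have hcbs : closedBall x0 r ⊆ s := fun x hx => (hball (hcb hx)).1
  have hcbΦ : ∀ x ∈ closedBall x0 r, ‖Φ x - ContinuousLinearMap.id ℝ E‖ ≤ 1/2 :=
    fun x hx => le_of_lt (hball (hcb hx)).2
  -- bound the derivatives of the frame fields on the closed ball
  have hCex : ∀ i : Fin m, ∃ Ci : ℝ, ∀ x ∈ closedBall x0 r, ‖fderiv ℝ (xi i) x‖ ≤ Ci := by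
    intro i
    exact (isCompact_closedBall x0 r).exists_bound_of_continuousOn
      (((hxi i).continuousOn_fderiv_of_isOpen hs (by exact_mod_cast le_top)).mono hcbs)
  choose C hC using hCex
  set Cs : ℝ := ∑ i, max (C i) 0 with hCs
  set K : ℝ := 2 * ‖R‖ * Cs with hK
  have hCs0 : 0 ≤ Cs := Finset.sum_nonneg fun i _ => le_max_right _ _
  -- key derivative bound
  have hbound : ∀ x ∈ closedBall x0 r, ∀ w : E, ‖fderiv ℝ y x w‖ ≤ K * ‖y x‖ * ‖w‖ := by
    intro x hx w
    have hxs : x ∈ s := hcbs hx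
    have hlow : ∀ u : E, ‖u‖ ≤ 2 * ‖Φ x u‖ := by
      intro u
      have h1 : ‖u - Φ x u‖ ≤ ‖Φ x - ContinuousLinearMap.id ℝ E‖ * ‖u‖ := by
        have := (Φ x - ContinuousLinearMap.id ℝ E).le_opNorm u
        simpa [norm_sub_rev (Φ x u) u] using this
      have h2 : ‖u‖ - ‖Φ x u‖ ≤ ‖u - Φ x u‖ := by
        simpa using norm_sub_norm_le u (Φ x u)
      have h3 := hcbΦ x hx
      nlinarith [norm_nonneg u, norm_nonneg (Φ x u)]
    have hinj : Function.Injective (Φ x) := by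
      intro a b hab
      have : ‖a - b‖ ≤ 2 * ‖Φ x (a - b)‖ := hlow _
      rw [map_sub, hab, sub_self] at this
      have h0 : ‖a - b‖ ≤ 0 := by simpa using this
      exact sub_eq_zero.mp (norm_le_zero_iff.mp h0)
    have hsurj : Function.Surjective (Φ x) :=
      (LinearMap.injective_iff_surjective (f := ((Φ x) : E →ₗ[ℝ] E))).mp hinj
    obtain ⟨u, hu⟩ := hsurj w
    have hunorm : ‖u‖ ≤ 2 * ‖w‖ := by simpa [hu] using hlow u
    have hwsum : w = ∑ i, (R u) i • xi i x := by
      rw [← hTapply]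
      exact hu.symm
    have hident : fderiv ℝ y x w = ∑ i, (R u) i • fderiv ℝ (xi i) x (y x) := by
      rw [hwsum, map_sum]
      congr 1
      funext i
      rw [map_smul, hpde i x hxs]
    rw [hident]
    have hterm : ∀ i : Fin m, ‖(R u) i • fderiv ℝ (xi i) x (y x)‖ ≤
        (‖R‖ * ‖u‖) * (max (C i) 0 * ‖y x‖) := by
      intro i
      rw [norm_smul]
      have h1 : ‖(R u) i‖ ≤ ‖R‖ * ‖u‖ :=
        (norm_le_pi_norm (R u) i).trans (R.le_opNorm u)
      have h2 : ‖fderiv ℝ (xi i) x (y x)‖ ≤ max (C i) 0 * ‖y x‖ :=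
        ((fderiv ℝ (xi i) x).le_opNorm (y x)).trans
          (mul_le_mul_of_nonneg_right (le_max_of_le_left (hC i x hx)) (norm_nonneg _))
      exact mul_le_mul h1 h2 (norm_nonneg _) (by positivity)
    calc ‖∑ i, (R u) i • fderiv ℝ (xi i) x (y x)‖
        ≤ ∑ i, ‖(R u) i • fderiv ℝ (xi i) x (y x)‖ := norm_sum_le _ _
      _ ≤ ∑ i, (‖R‖ * ‖u‖) * (max (C i) 0 * ‖y x‖) := Finset.sum_le_sum fun i _ => hterm i
      _ = (‖R‖ * ‖u‖ * ‖y x‖) * Cs := by rw [hCs, Finset.mul_sum]; congr 1; funext i; ring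
      _ ≤ (‖R‖ * (2 * ‖w‖) * ‖y x‖) * Cs := by gcongr
      _ = K * ‖y x‖ * ‖w‖ := by rw [hK]; ring
  -- Grönwall along segments
  have hzero : ∀ x1 ∈ closedBall x0 r, y x1 = 0 := by
    intro x1 hx1
    set v : E := x1 - x0 with hv
    set γ : ℝ → E := fun t => x0 + t • v with hγ
    have hseg : ∀ t ∈ Icc (0:ℝ) 1, γ t ∈ closedBall x0 r := by
      intro t ht
      rw [mem_closedBall, dist_eq_norm]
      have : ‖x0 + t • v - x0‖ = |t| * ‖v‖ := by
        rw [add_sub_cancel_left, norm_smul, Real.norm_eq_abs]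
      rw [hγ]
      simp only []
      rw [this]
      have h1 : |t| ≤ 1 := abs_le.mpr ⟨by linarith [ht.1], ht.2⟩
      have h2 : ‖v‖ ≤ r := by rw [hv, ← dist_eq_norm]; exact mem_closedBall.mp hx1
      nlinarith [norm_nonneg v]
    have hdiff : ∀ t ∈ Icc (0:ℝ) 1, HasDerivAt (y ∘ γ) (fderiv ℝ y (γ t) v) t := by
      intro t ht
      have hmem : γ t ∈ s := hcbs (hseg t ht)
      have hyd : HasFDerivAt y (fderiv ℝ y (γ t)) (γ t) :=
        ((hy.contDiffAt (hs.mem_nhds hmem)).differentiableAt (by simp)).hasFDerivAt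
      have hpath : HasDerivAt γ v t := by
        have h := ((hasDerivAt_id' t).smul_const v).const_add x0; rw [one_smul] at h; exact h
      exact hyd.comp_hasDerivAt t hpath
    have hcont : ContinuousOn (y ∘ γ) (Icc 0 1) :=
      fun t ht => ((hdiff t ht).continuousAt).continuousWithinAt
    have hg0 : ‖(y ∘ γ) 0‖ ≤ 0 := by
      have : γ 0 = x0 := by simp [hγ]
      simp [Function.comp, this, hy0]
    have hbnd : ∀ t ∈ Ico (0:ℝ) 1, ‖fderiv ℝ y (γ t) v‖ ≤ (K * ‖v‖) * ‖(y ∘ γ) t‖ + 0 := by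
      intro t ht
      have := hbound (γ t) (hseg t (Ico_subset_Icc_self ht)) v
      simp only [Function.comp, add_zero]
      nlinarith [this]
    have := norm_le_gronwallBound_of_norm_deriv_right_le hcont
      (fun t ht => (hdiff t (Ico_subset_Icc_self ht)).hasDerivWithinAt) hg0 hbnd
      1 (by norm_num)
    rw [gronwallBound_ε0_δ0] at this
    have hγ1 : γ 1 = x1 := by simp [hγ, hv]
    have : ‖y x1‖ ≤ 0 := by simpa [Function.comp, hγ1] using this
    simpa using this.antisymm (norm_nonneg _)
  filter_upwards [closedBall_mem_nhds x0 hrpos] with x hx using hzero x hx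

theorem vfderiv_zero_vf (f : M → ℝ) :
    VFDeriv n (fun p : M => (0 : TangentSpace (𝓡 n) p)) f = fun _ => (0 : ℝ) := by
  funext q; exact (mfderiv (𝓡 n) 𝓘(ℝ) f q).map_zero

theorem symm_zero_eventually [T2Space M] {X : Fin n → ∀ p : M, TangentSpace (𝓡 n) p}
    (hX : IsFrame n X) {Y : ∀ p : M, TangentSpace (𝓡 n) p} (hYs : SmoothVF n Y)
    (hYb : ∀ i, IsLieBracketOf n Y (X i) (fun p => (0 : TangentSpace (𝓡 n) p)))
    {q0 : M} (h0 : Y q0 = 0) : ∀ᶠ q in 𝓝 q0, Y q = 0 := by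
  classical
  set c := chartAt (EucSp n) q0 with hcdef
  obtain ⟨γ⟩ : Nonempty (SmoothBumpFunction (𝓡 n) q0) := inferInstance
  set V : Set M := interior {q | γ q = 1} ∩ c.source with hVdef
  have hVopen : IsOpen V := isOpen_interior.inter c.open_source
  have hq0V : q0 ∈ V := by
    constructor
    · rw [mem_interior_iff_mem_nhds]
      exact γ.eventuallyEq_one
    · exact mem_chart_source _ q0
  have hVγ : ∀ q ∈ V, γ q = 1 := fun q hq =>
    show q ∈ {q : M | γ q = 1} from interior_subset hq.1
  have hVsrc : V ⊆ c.source := inter_subset_right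
  set yh : EucSp n → EucSp n :=
    fun x => mfderiv (𝓡 n) (𝓡 n) c (c.symm x) (Y (c.symm x)) with hyhdef
  set xih : Fin n → EucSp n → EucSp n :=
    fun i x => mfderiv (𝓡 n) (𝓡 n) c (c.symm x) (X i (c.symm x)) with hxihdef
  have hrepY : ∀ q' ∈ V, (mfderiv (𝓡 n) (𝓡 n) c q' (Y q') : EucSp n) = yh (c q') := by
    intro q' hq'
    rw [hyhdef]
    simp only []
    rw [c.left_inv (hVsrc hq')]
  have hrepX : ∀ i, ∀ q' ∈ V,
      (mfderiv (𝓡 n) (𝓡 n) c q' (X i q') : EucSp n) = xih i (c q') := by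
    intro i q' hq'
    rw [hxihdef]
    simp only []
    rw [c.left_inv (hVsrc hq')]
  set W0 : Set (EucSp n) := c.target ∩ c.symm ⁻¹' V with hW0def
  have hW0open : IsOpen W0 := c.continuousOn_symm.isOpen_inter_preimage c.open_target hVopen
  have hx0 : c q0 ∈ W0 := by
    refine ⟨c.map_source (mem_chart_source _ q0), ?_⟩
    show c.symm (c q0) ∈ V
    rw [c.left_inv (mem_chart_source _ q0)]
    exact hq0V
  have hcq : ∀ x ∈ W0, c (c.symm x) = x := fun x hx => c.right_inv hx.1
  -- smoothness of the chart representations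
  have hsmooth : ∀ (W : ∀ p : M, TangentSpace (𝓡 n) p), SmoothVF n W →
      ∀ wh : EucSp n → EucSp n,
      (∀ q' ∈ V, (mfderiv (𝓡 n) (𝓡 n) c q' (W q') : EucSp n) = wh (c q')) →
      ContDiffOn ℝ ((⊤ : ℕ∞) : WithTop ℕ∞) wh W0 := by
    intro W hWs wh hrep
    rw [contDiffOn_euclidean]
    intro j
    have h1 : ContMDiffOn (𝓡 n) 𝓘(ℝ) (⊤ : ℕ∞)
        (fun x => VFDeriv n W (bumpFn γ (EuclideanSpace.proj j)) (c.symm x)) W0 :=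
      (contMDiff_vfderiv hWs (bumpFn_smooth γ _)).comp_contMDiffOn
        (contMDiffOn_chart_symm.mono inter_subset_left)
    have h2 := contMDiffOn_iff_contDiffOn.mp h1
    apply h2.congr
    intro x hx
    have h3 : ∀ᶠ q'' in 𝓝 (c.symm x), γ q'' = 1 :=
      eventually_of_mem (hVopen.mem_nhds hx.2) hVγ
    have h4 := vfderiv_bumpFn γ (EuclideanSpace.proj j) W h3 (hVsrc hx.2)
    rw [hrep _ hx.2, hcq x hx] at h4
    exact h4.symm
  have hyhs := hsmooth Y hYs yh hrepY
  have hxihs : ∀ i, ContDiffOn ℝ ((⊤ : ℕ∞) : WithTop ℕ∞) (xih i) W0 :=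
    fun i => hsmooth (X i) (hX.smooth i) (xih i) (hrepX i)
  -- the PDE satisfied by yh
  have hpde : ∀ i, ∀ x ∈ W0, fderiv ℝ yh x (xih i x) = fderiv ℝ (xih i) x (yh x) := by
    intro i x hx
    have hqV : c.symm x ∈ V := hx.2
    have hyd : DifferentiableAt ℝ yh x :=
      (hyhs.contDiffAt (hW0open.mem_nhds hx)).differentiableAt (by simp)
    have hxid : DifferentiableAt ℝ (xih i) x :=
      ((hxihs i).contDiffAt (hW0open.mem_nhds hx)).differentiableAt (by simp)
    have hyd' : DifferentiableAt ℝ yh (c (c.symm x)) := by rw [hcq x hx]; exact hyd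
    have hxid' : DifferentiableAt ℝ (xih i) (c (c.symm x)) := by rw [hcq x hx]; exact hxid
    apply PiLp.ext
    intro j
    set ℓ : EucSp n →L[ℝ] ℝ := EuclideanSpace.proj j with hldef
    have t1 := vfderiv2_bumpFn γ ℓ (X i) (xih i) hVopen hVγ hVsrc (hrepX i) hqV hxid' Y
    have t2 := vfderiv2_bumpFn γ ℓ Y yh hVopen hVγ hVsrc hrepY hqV hyd' (X i)
    have e := hYb i (bumpFn γ ℓ) (bumpFn_smooth γ ℓ) (c.symm x)
    rw [vfderiv_zero_vf] at e
    rw [t1, t2] at e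
    rw [hrepY _ hqV, hrepX i _ hqV, hcq x hx] at e
    have e2 : ℓ ((fderiv ℝ (xih i) x) (yh x)) - ℓ ((fderiv ℝ yh x) (xih i x)) = 0 := e
    show ℓ (fderiv ℝ yh x (xih i x)) = ℓ (fderiv ℝ (xih i) x (yh x))
    linarith
  -- the frame spans at the center
  have hspan : Submodule.span ℝ (Set.range fun i => xih i (c q0)) = ⊤ := by
    have hrw : (fun i => xih i (c q0))
        = fun i => mfderiv (𝓡 n) (𝓡 n) c q0 (X i q0) := by
      funext i
      exact (hrepX i q0 hq0V).symm
    rw [hrw]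
    have hsurj : Function.Surjective (mfderiv (𝓡 n) (𝓡 n) c q0) :=
      (mdifferentiable_chart q0).mfderiv_surjective (mem_chart_source _ q0)
    have himg : (Set.range fun i => (mfderiv (𝓡 n) (𝓡 n) c q0 (X i q0) : EucSp n))
        = (mfderiv (𝓡 n) (𝓡 n) c q0) '' (Set.range fun i => X i q0) := by
      rw [← Set.range_comp]
      rfl
    have hfin := Submodule.span_image ((mfderiv (𝓡 n) (𝓡 n) c q0 :
      TangentSpace (𝓡 n) q0 →ₗ[ℝ] TangentSpace (𝓡 n) (c q0))) (s := Set.range fun i => X i q0)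
    rw [hX.span q0, Submodule.map_top, (LinearMap.range_eq_top (f := (mfderiv (𝓡 n) (𝓡 n) c q0 :
      TangentSpace (𝓡 n) q0 →ₗ[ℝ] TangentSpace (𝓡 n) (c q0)))).mpr hsurj,
      ContinuousLinearMap.coe_coe, ← himg] at hfin
    exact hfin
  have hy0 : yh (c q0) = 0 := by
    rw [← hrepY q0 hq0V, h0]
    exact (mfderiv (𝓡 n) (𝓡 n) c q0).map_zero
  -- apply the Grönwall argument
  have gron := gronwall_vanish xih yh W0 hW0open hx0 hyhs hxihs hpde hspan hy0
  obtain ⟨O, hOsub, hOopen, hOx0⟩ := _root_.eventually_nhds_iff.mp gron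
  have hNopen : IsOpen (V ∩ (c.source ∩ c ⁻¹' O)) :=
    hVopen.inter (c.continuousOn.isOpen_inter_preimage c.open_source hOopen)
  have hq0N : q0 ∈ V ∩ (c.source ∩ c ⁻¹' O) :=
    ⟨hq0V, mem_chart_source _ q0, hOx0⟩
  filter_upwards [hNopen.mem_nhds hq0N] with q hq
  have h1 : yh (c q) = 0 := hOsub _ hq.2.2
  have h2 : mfderiv (𝓡 n) (𝓡 n) c q (Y q) = (0 : EucSp n) := by
    rw [hrepY q hq.1, h1]
  have hinj : Function.Injective (mfderiv (𝓡 n) (𝓡 n) c q) :=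
    (mdifferentiable_chart q0).mfderiv_injective hq.2.1
  apply hinj
  rw [h2, (mfderiv (𝓡 n) (𝓡 n) c q).map_zero]
  exact rfl

theorem symm_ne_eventually [T2Space M] {Y : ∀ p : M, TangentSpace (𝓡 n) p} (hYs : SmoothVF n Y)
    {q0 : M} (h0 : Y q0 ≠ 0) : ∀ᶠ q in 𝓝 q0, Y q ≠ 0 := by
  classical
  set c := chartAt (EucSp n) q0 with hcdef
  obtain ⟨γ⟩ : Nonempty (SmoothBumpFunction (𝓡 n) q0) := inferInstance
  have hinj : Function.Injective (mfderiv (𝓡 n) (𝓡 n) c q0) :=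
    (mdifferentiable_chart q0).mfderiv_injective (mem_chart_source _ q0)
  have hne : (mfderiv (𝓡 n) (𝓡 n) c q0 (Y q0) : EucSp n) ≠ 0 := by
    intro h
    apply h0
    apply hinj
    rw [h, (mfderiv (𝓡 n) (𝓡 n) c q0).map_zero]
  obtain ⟨j, hj⟩ : ∃ j, (mfderiv (𝓡 n) (𝓡 n) c q0 (Y q0) : EucSp n).ofLp j ≠ 0 := by
    by_contra h
    push_neg at h
    exact hne (PiLp.ext (p := 2) (fun i => (h i).trans rfl))
  set ℓ : EucSp n →L[ℝ] ℝ := EuclideanSpace.proj j with hldef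
  set g : M → ℝ := VFDeriv n Y (bumpFn γ ℓ) with hgdef
  have hg0 : g q0 ≠ 0 := by
    rw [hgdef, vfderiv_bumpFn γ ℓ Y γ.eventuallyEq_one (mem_chart_source _ q0)]
    exact hj
  have hgc : ContinuousAt g q0 :=
    (contMDiff_vfderiv hYs (bumpFn_smooth γ ℓ)).continuous.continuousAt
  filter_upwards [hgc.eventually_ne hg0] with q hq
  intro hYq
  apply hq
  show mfderiv (𝓡 n) 𝓘(ℝ) (bumpFn γ ℓ) q (Y q) = 0
  rw [hYq, (mfderiv (𝓡 n) 𝓘(ℝ) (bumpFn γ ℓ) q).map_zero]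

theorem symm_vanish_global [T2Space M] [ConnectedSpace M]
    {X : Fin n → ∀ p : M, TangentSpace (𝓡 n) p}
    (hX : IsFrame n X) {Y : ∀ p : M, TangentSpace (𝓡 n) p} (hYs : SmoothVF n Y)
    (hYb : ∀ i, IsLieBracketOf n Y (X i) (fun p => (0 : TangentSpace (𝓡 n) p)))
    {p : M} (hp : Y p = 0) : ∀ q, Y q = 0 := by
  set S : Set M := {q | Y q = 0} with hSdef
  have hSopen : IsOpen S := by
    rw [isOpen_iff_eventually]
    intro q hq
    exact symm_zero_eventually hX hYs hYb hq
  have hScopen : IsOpen Sᶜ := by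
    rw [isOpen_iff_eventually]
    intro q hq
    exact symm_ne_eventually hYs hq
  have hclopen : IsClopen S := ⟨isOpen_compl_iff.mp hScopen, hSopen⟩
  have := hclopen.eq_univ (s := S) ⟨p, hp⟩
  intro q
  have : q ∈ S := this ▸ mem_univ q
  exact this

theorem smoothVF_zero : SmoothVF n (fun p : M => (0 : TangentSpace (𝓡 n) p)) :=
  Bundle.contMDiff_zeroSection ℝ (TangentSpace (𝓡 n) : M → Type _)

theorem smoothVF_add {Y Z : ∀ p : M, TangentSpace (𝓡 n) p} (hY : SmoothVF n Y)
    (hZ : SmoothVF n Z) : SmoothVF n (Y + Z) := by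
  let sY : Cₛ^(⊤ : ℕ∞)⟮𝓡 n; EucSp n, TangentSpace (𝓡 n) (M := M)⟯ := ⟨Y, hY⟩
  let sZ : Cₛ^(⊤ : ℕ∞)⟮𝓡 n; EucSp n, TangentSpace (𝓡 n) (M := M)⟯ := ⟨Z, hZ⟩
  have h := (sY + sZ).contMDiff
  have hcoe : ⇑(sY + sZ) = Y + Z := ContMDiffSection.coe_add sY sZ
  rw [hcoe] at h
  exact h

theorem smoothVF_smul (c : ℝ) {Y : ∀ p : M, TangentSpace (𝓡 n) p} (hY : SmoothVF n Y) :
    SmoothVF n (c • Y) := by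
  let sY : Cₛ^(⊤ : ℕ∞)⟮𝓡 n; EucSp n, TangentSpace (𝓡 n) (M := M)⟯ := ⟨Y, hY⟩
  have h := (c • sY).contMDiff
  have hcoe : ⇑(c • sY) = c • Y := ContMDiffSection.coe_smul c sY
  rw [hcoe] at h
  exact h

theorem bracket0_zero (Xi : ∀ p : M, TangentSpace (𝓡 n) p) :
    IsLieBracketOf n (fun p : M => (0 : TangentSpace (𝓡 n) p)) Xi
      (fun p : M => (0 : TangentSpace (𝓡 n) p)) := by
  intro f hf p
  rw [vfderiv_zero_vf (VFDeriv n Xi f), vfderiv_zero_vf f]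
  show (0 : ℝ) - VFDeriv n Xi (fun _ => (0:ℝ)) p = 0
  have : VFDeriv n Xi (fun _ : M => (0:ℝ)) p = 0 := by
    show mfderiv (𝓡 n) 𝓘(ℝ) (fun _ : M => (0:ℝ)) p (Xi p) = 0
    rw [mfderiv_const]
    rfl
  rw [this]; ring

theorem mdiff_vfd {Y : ∀ p : M, TangentSpace (𝓡 n) p} (hY : SmoothVF n Y) {f : M → ℝ}
    (hf : ContMDiff (𝓡 n) 𝓘(ℝ) (⊤ : ℕ∞) f) (p : M) :
    MDifferentiableAt (𝓡 n) 𝓘(ℝ) (VFDeriv n Y f) p :=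
  ((contMDiff_vfderiv hY hf) p).mdifferentiableAt (by simp)

theorem bracket0_add {Y Z Xi : ∀ p : M, TangentSpace (𝓡 n) p} (hY : SmoothVF n Y)
    (hZ : SmoothVF n Z)
    (bY : IsLieBracketOf n Y Xi (fun p : M => (0 : TangentSpace (𝓡 n) p)))
    (bZ : IsLieBracketOf n Z Xi (fun p : M => (0 : TangentSpace (𝓡 n) p))) :
    IsLieBracketOf n (Y + Z) Xi (fun p : M => (0 : TangentSpace (𝓡 n) p)) := by
  intro f hf p
  rw [vfderiv_zero_vf f]
  have h1 : VFDeriv n (Y + Z) (VFDeriv n Xi f) p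
      = VFDeriv n Y (VFDeriv n Xi f) p + VFDeriv n Z (VFDeriv n Xi f) p :=
    (mfderiv (𝓡 n) 𝓘(ℝ) (VFDeriv n Xi f) p).map_add (Y p) (Z p)
  have h2 : VFDeriv n (Y + Z) f = VFDeriv n Y f + VFDeriv n Z f := by
    funext q
    exact (mfderiv (𝓡 n) 𝓘(ℝ) f q).map_add (Y q) (Z q)
  have h3 : VFDeriv n Xi (VFDeriv n (Y + Z) f) p
      = VFDeriv n Xi (VFDeriv n Y f) p + VFDeriv n Xi (VFDeriv n Z f) p := by
    rw [h2]
    show mfderiv (𝓡 n) 𝓘(ℝ) (VFDeriv n Y f + VFDeriv n Z f) p (Xi p) = _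
    rw [((mdiff_vfd hY hf p).hasMFDerivAt.add (mdiff_vfd hZ hf p).hasMFDerivAt).mfderiv]
    rfl
  have e1 := bY f hf p
  have e2 := bZ f hf p
  rw [vfderiv_zero_vf f] at e1 e2
  simp only at e1 e2 ⊢
  rw [h1, h3]
  linarith

theorem bracket0_smul (c : ℝ) {Y Xi : ∀ p : M, TangentSpace (𝓡 n) p} (hY : SmoothVF n Y)
    (bY : IsLieBracketOf n Y Xi (fun p : M => (0 : TangentSpace (𝓡 n) p))) :
    IsLieBracketOf n (c • Y) Xi (fun p : M => (0 : TangentSpace (𝓡 n) p)) := by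
  intro f hf p
  rw [vfderiv_zero_vf f]
  have h1 : VFDeriv n (c • Y) (VFDeriv n Xi f) p = c * VFDeriv n Y (VFDeriv n Xi f) p :=
    (mfderiv (𝓡 n) 𝓘(ℝ) (VFDeriv n Xi f) p).map_smul c (Y p)
  have h2 : VFDeriv n (c • Y) f = c • VFDeriv n Y f := by
    funext q
    exact (mfderiv (𝓡 n) 𝓘(ℝ) f q).map_smul c (Y q)
  have h3 : VFDeriv n Xi (VFDeriv n (c • Y) f) p = c * VFDeriv n Xi (VFDeriv n Y f) p := by
    rw [h2]
    show mfderiv (𝓡 n) 𝓘(ℝ) (c • VFDeriv n Y f) p (Xi p) = _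
    rw [((mdiff_vfd hY hf p).hasMFDerivAt.const_smul c).mfderiv]
    rfl
  have e1 := bY f hf p
  rw [vfderiv_zero_vf f] at e1
  simp only at e1 ⊢
  rw [h1, h3]
  linear_combination c * e1

end AuxiliaryLemmas

set_option maxHeartbeats 1000000 in
/-- the infinitesimal symmetries of a coframe on a connected manifold form a
real vector subspace of the space of vector fields, on which evaluation at any point is
injective; in particular this space is finite-dimensional of dimension at most `n`. -/
theorem symmetry_algebra_finite_dimensional
    (n : ℕ) {M : Type*} [TopologicalSpace M] [ChartedSpace (EucSp n) M]
    [IsManifold (𝓡 n) (⊤ : ℕ∞) M] [T2Space M] [ConnectedSpace M]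
    (X : Fin n → ∀ p : M, TangentSpace (𝓡 n) p) (hX : IsFrame n X) :
    ∃ g : Submodule ℝ (∀ p : M, TangentSpace (𝓡 n) p),
      ((g : Set (∀ p : M, TangentSpace (𝓡 n) p)) =
        {Y | SmoothVF n Y ∧ ∀ i, IsLieBracketOf n Y (X i) (fun p => (0 : TangentSpace (𝓡 n) p))}) ∧
      (∀ p : M, ∀ Y ∈ g, ∀ Z ∈ g, Y p = Z p → Y = Z) ∧
      FiniteDimensional ℝ g ∧ Module.finrank ℝ g ≤ n := by
  classical
  have hNE : Nonempty M := inferInstance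
  set gsub : Submodule ℝ (∀ p : M, TangentSpace (𝓡 n) p) :=
    { carrier := {Y | SmoothVF n Y ∧
        ∀ i, IsLieBracketOf n Y (X i) (fun p => (0 : TangentSpace (𝓡 n) p))},
      add_mem' := by
        rintro a b ⟨has, hab⟩ ⟨hbs, hbb⟩
        exact ⟨smoothVF_add has hbs, fun i => bracket0_add has hbs (hab i) (hbb i)⟩,
      zero_mem' := ⟨smoothVF_zero, fun i => bracket0_zero (X i)⟩,
      smul_mem' := by
        rintro c a ⟨has, hab⟩
        exact ⟨smoothVF_smul c has, fun i => bracket0_smul c has (hab i)⟩ } with hgdef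
  have hinj2 : ∀ p : M, ∀ Y ∈ gsub, ∀ Z ∈ gsub, Y p = Z p → Y = Z := by
    intro p Y hY Z hZ hpq
    obtain ⟨hs, hb⟩ := sub_mem hY hZ
    have h0 : (Y - Z) p = 0 := by
      show Y p - Z p = 0
      rw [hpq]
      exact sub_self _
    have hall := symm_vanish_global hX hs hb h0
    funext q
    have hq : Y q - Z q = 0 := hall q
    exact sub_eq_zero.mp hq
  set p0 : M := Classical.arbitrary M
  have hfd : FiniteDimensional ℝ (TangentSpace (𝓡 n) p0) :=
    inferInstanceAs (FiniteDimensional ℝ (EucSp n))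
  set ev : gsub →ₗ[ℝ] TangentSpace (𝓡 n) p0 :=
    { toFun := fun Y => (Y : ∀ p : M, TangentSpace (𝓡 n) p) p0,
      map_add' := fun a b => rfl,
      map_smul' := fun c a => rfl } with hevdef
  have hevinj : Function.Injective ev := by
    intro a b hab
    exact Subtype.ext (hinj2 p0 a a.2 b b.2 hab)
  have hfing : FiniteDimensional ℝ gsub := FiniteDimensional.of_injective ev hevinj
  refine ⟨gsub, rfl, hinj2, hfing, ?_⟩
  have h1 := LinearMap.finrank_le_finrank_of_injective hevinj
  have h2 : Module.finrank ℝ (TangentSpace (𝓡 n) p0) = n :=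
    finrank_euclideanSpace_fin
  rw [h2] at h1
  exact h1
end
end

section
/- Let M be a connected smooth n-manifold, θ a coframe on M, and φ : M → M a diffeomorphism with φ*θ^i = θ^i for all i. If φ has a fixed point, then φ is the identity map of M. -/
/-!
Common definitions: coframes (via their dual frames), Lie brackets of vector fields
(characterized by their action on smooth functions), invariant functions, ranks,
Cartan realization data and realizations.
-/

open Manifold Set Filter
open scoped Topology

noncomputable section

theorem key_fderiv (n : ℕ) {M : Type*} [TopologicalSpace M] [ChartedSpace (EucSp n) M]
    [IsManifold (𝓡 n) (⊤ : ℕ∞) M]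
    (φ : M → M) (hφs : ContMDiff (𝓡 n) (𝓡 n) (⊤ : ℕ∞) φ) (q : M)
    (y : EucSp n) (hy : y ∈ (extChartAt (𝓡 n) q).target)
    (hy2 : φ ((extChartAt (𝓡 n) q).symm y) ∈ (extChartAt (𝓡 n) q).source) :
    ∃ D : EucSp n →L[ℝ] EucSp n,
      HasFDerivAt (fun z => extChartAt (𝓡 n) q (φ ((extChartAt (𝓡 n) q).symm z))) D y ∧
      ∀ v : EucSp n,
        D (tangentCoordChange (𝓡 n) ((extChartAt (𝓡 n) q).symm y) q ((extChartAt (𝓡 n) q).symm y) v)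
          = tangentCoordChange (𝓡 n) (φ ((extChartAt (𝓡 n) q).symm y)) q
              (φ ((extChartAt (𝓡 n) q).symm y))
              (mfderiv (𝓡 n) (𝓡 n) φ ((extChartAt (𝓡 n) q).symm y) v) := by
  set e := extChartAt (𝓡 n) q with he
  set p := e.symm y with hp
  have hrange : range (𝓡 n) = univ := ModelWithCorners.range_eq_univ _
  have hpsrc : p ∈ e.source := e.map_target hy
  have hey : e p = y := e.right_inv hy
  have hB : HasFDerivAt (extChartAt (𝓡 n) p ∘ e.symm) (tangentCoordChange (𝓡 n) q p p) y := by
    have := hasFDerivWithinAt_tangentCoordChange (I := 𝓡 n) (x := q) (y := p) (z := p)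
      ⟨hpsrc, mem_extChartAt_source p⟩
    rw [hrange, hasFDerivWithinAt_univ, hey] at this
    exact this
  have hmd : MDifferentiableAt (𝓡 n) (𝓡 n) φ p := (hφs p).mdifferentiableAt (by simp)
  have hDφ : HasFDerivAt (writtenInExtChartAt (𝓡 n) (𝓡 n) p φ)
      (mfderiv (𝓡 n) (𝓡 n) φ p) (extChartAt (𝓡 n) p p) := by
    have := hmd.hasMFDerivAt.2
    rw [hrange] at this
    exact hasFDerivWithinAt_univ.mp this
  have hA : HasFDerivAt (e ∘ (extChartAt (𝓡 n) (φ p)).symm)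
      (tangentCoordChange (𝓡 n) (φ p) q (φ p)) (extChartAt (𝓡 n) (φ p) (φ p)) := by
    have := hasFDerivWithinAt_tangentCoordChange (I := 𝓡 n) (x := φ p) (y := q) (z := φ p)
      ⟨mem_extChartAt_source (φ p), hy2⟩
    rw [hrange, hasFDerivWithinAt_univ] at this
    exact this
  have hval : writtenInExtChartAt (𝓡 n) (𝓡 n) p φ (extChartAt (𝓡 n) p p)
      = extChartAt (𝓡 n) (φ p) (φ p) := by
    simp [writtenInExtChartAt, extChartAt_to_inv]
  rw [← hval] at hA
  have hcomp := hA.comp y (hDφ.comp y hB)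
  refine ⟨_, hcomp.congr_of_eventuallyEq ?_, ?_⟩
  · -- transfer from composite to Φ via eventual equality
    have hS : (e.target ∩ e.symm ⁻¹' ((extChartAt (𝓡 n) p).source ∩
        φ ⁻¹' (extChartAt (𝓡 n) (φ p)).source)) ∈ 𝓝 y := by
      refine Filter.inter_mem ((isOpen_extChartAt_target q).mem_nhds hy) ?_
      refine (continuousAt_extChartAt_symm'' hy).preimage_mem_nhds ?_
      refine IsOpen.mem_nhds ?_ ?_
      · exact (isOpen_extChartAt_source p).inter
          ((isOpen_extChartAt_source (φ p)).preimage hφs.continuous)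
      · exact ⟨mem_extChartAt_source p, mem_extChartAt_source (φ p)⟩
    filter_upwards [hS] with z hz
    obtain ⟨hz1, hz2, hz3⟩ := hz
    show extChartAt (𝓡 n) q (φ (e.symm z)) = _
    simp only [Function.comp_apply, writtenInExtChartAt,
      PartialEquiv.left_inv _ hz2, PartialEquiv.left_inv _ (Set.mem_preimage.mp hz3)]
    rfl
  · intro v
    have hBv : tangentCoordChange (𝓡 n) q p p (tangentCoordChange (𝓡 n) p q p v) = v := by
      rw [tangentCoordChange_comp (I := 𝓡 n) ⟨⟨mem_extChartAt_source p, hpsrc⟩,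
        mem_extChartAt_source p⟩, tangentCoordChange_self (I := 𝓡 n) (mem_extChartAt_source p)]
    simp only [ContinuousLinearMap.comp_apply]
    show tangentCoordChange (𝓡 n) (φ p) q (φ p) (mfderiv (𝓡 n) (𝓡 n) φ p
      (tangentCoordChange (𝓡 n) q p p (tangentCoordChange (𝓡 n) p q p v))) = _
    rw [hBv]


/-- a symmetry of a coframe on a connected manifold (a global self-equivalence)
with a fixed point is the identity. -/
theorem symmetry_with_fixed_point_is_id
    (n : ℕ) {M : Type*} [TopologicalSpace M] [ChartedSpace (EucSp n) M]
    [IsManifold (𝓡 n) (⊤ : ℕ∞) M] [T2Space M] [ConnectedSpace M]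
    (X : Fin n → ∀ p : M, TangentSpace (𝓡 n) p) (hX : IsFrame n X)
    (φ : M → M) (hφ : IsEquivOn n X X Set.univ Set.univ φ)
    (p : M) (hp : φ p = p) :
    φ = id := by
  classical
  -- Extract data from the equivalence hypothesis
  obtain ⟨-, -, hbij, hsm, hinv, hder⟩ := hφ
  have hφs : ContMDiff (𝓡 n) (𝓡 n) (⊤ : ℕ∞) φ := contMDiffOn_univ.mp hsm
  have hmfd : ∀ i (m : M), mfderiv (𝓡 n) (𝓡 n) φ m (X i m) = X i (φ m) :=
    fun i m => hder i m (Set.mem_univ m)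
  -- The fixed point set
  set A : Set M := {m | φ m = m} with hA
  have hclosed : IsClosed A := isClosed_eq hφs.continuous continuous_id
  have hopen : IsOpen A := by
    rw [isOpen_iff_mem_nhds]
    intro q hq
    have hq' : φ q = q := hq
    -- Chart data
    set e := extChartAt (𝓡 n) q with he
    set x₀ : EucSp n := e q with hx₀
    set Φ : EucSp n → EucSp n := fun z => extChartAt (𝓡 n) q (φ ((extChartAt (𝓡 n) q).symm z))
      with hΦdef
    -- the frame in the chart
    set L : Fin n → EucSp n → EucSp n := fun i y =>
      tangentCoordChange (𝓡 n) (e.symm y) q (e.symm y) (X i (e.symm y)) with hLdef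
    set Z : EucSp n → (EucSp n →L[ℝ] EucSp n) := fun y =>
      ∑ i, (EuclideanSpace.proj i : EucSp n →L[ℝ] ℝ).smulRight (L i y) with hZdef
    have hZapp : ∀ y w, Z y w = ∑ i, w i • L i y := by
      intro y w
      simp [hZdef, ContinuousLinearMap.sum_apply]
    -- smoothness of the chart frame
    have hLcd : ∀ i, ContDiffAt ℝ 1 (L i) x₀ := by
      intro i
      have hv := ((hX.smooth i) q).of_le (show (1 : WithTop ℕ∞) ≤ ((⊤ : ℕ∞) : WithTop ℕ∞) by exact_mod_cast (le_top : (1:ℕ∞) ≤ ⊤))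
      rw [contMDiffAt_iff] at hv
      obtain ⟨-, hv⟩ := hv
      exact (hv.contDiffAt (range_mem_nhds_isInteriorPoint
        (BoundarylessManifold.isInteriorPoint))).snd
    have hZcd : ContDiffAt ℝ 1 Z x₀ := by
      apply ContDiffAt.sum
      intro i _
      exact ((ContinuousLinearMap.smulRightL ℝ (EucSp n) (EucSp n)
        (EuclideanSpace.proj i)).contDiff.contDiffAt).comp x₀ (hLcd i)
    -- the frame at the base point
    have hsymm₀ : e.symm x₀ = q := extChartAt_to_inv q
    have hL0 : ∀ i, L i x₀ = X i q := by
      intro i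
      have hgen : ∀ z : M, z = q →
          (tangentCoordChange (𝓡 n) z q z (X i z) : EucSp n) = X i q := by
        rintro z rfl
        exact tangentCoordChange_self (I := 𝓡 n) (mem_extChartAt_source z)
      exact hgen _ hsymm₀
    -- Z x₀ is invertible
    have hZ0app : ∀ w : EucSp n, Z x₀ w = ∑ i, w i • X i q := by
      intro w; rw [hZapp]; simp only [hL0]; rfl
    have hinj : Function.Injective (Z x₀) := by
      rw [injective_iff_map_eq_zero]
      intro w hw
      rw [hZ0app] at hw
      have h0 := linearIndependent_iff'.mp (hX.indep q) Finset.univ (fun i => w i) hw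
      ext i
      exact h0 i (Finset.mem_univ i)
    have hsurj : Function.Surjective (Z x₀) := by
      intro u
      have hu : u ∈ Submodule.span ℝ (Set.range fun i => X i q) := by
        rw [hX.span q]; trivial
      obtain ⟨c, hc⟩ := (Submodule.mem_span_range_iff_exists_fun (R := ℝ) (M := TangentSpace (𝓡 n) q)).mp hu
      refine ⟨(WithLp.equiv 2 (Fin n → ℝ)).symm c, ?_⟩
      rw [hZ0app]
      exact hc
    have hunit₀ : IsUnit (Z x₀) := by
      let ce : EucSp n ≃L[ℝ] EucSp n :=
        (LinearEquiv.ofBijective ((Z x₀).toLinearMap) ⟨hinj, hsurj⟩).toContinuousLinearEquiv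
      have hce : ∀ w, ce w = Z x₀ w := fun _ => rfl
      refine ⟨⟨Z x₀, (ce.symm : EucSp n →L[ℝ] EucSp n), ?_, ?_⟩, rfl⟩
      · ext w
        simp only [ContinuousLinearMap.mul_apply, ContinuousLinearMap.one_apply,
          ContinuousLinearMap.coe_coe, ContinuousLinearEquiv.coe_coe]
        rw [← hce, ce.apply_symm_apply]
      · ext w
        simp only [ContinuousLinearMap.mul_apply, ContinuousLinearMap.one_apply,
          ContinuousLinearMap.coe_coe, ContinuousLinearEquiv.coe_coe]
        rw [← hce, ce.symm_apply_apply]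
    -- Lipschitz neighborhood for Z
    obtain ⟨K, s₁, hs₁, hKlip⟩ := hZcd.exists_lipschitzOnWith
    set O₁ : Set (EucSp n) := interior s₁ with hO₁
    have hO₁open : IsOpen O₁ := isOpen_interior
    have hxO₁ : x₀ ∈ O₁ := mem_interior_iff_mem_nhds.mpr hs₁
    have hKlip₁ : LipschitzOnWith K Z O₁ := hKlip.mono interior_subset
    have hZcont : ContinuousOn Z O₁ := hKlip₁.continuousOn
    -- the set where Z is a unit
    set O₂ : Set (EucSp n) := O₁ ∩ Z ⁻¹' {u | IsUnit u} with hO₂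
    have hO₂open : IsOpen O₂ := hZcont.isOpen_inter_preimage hO₁open Units.isOpen
    have hxO₂ : x₀ ∈ O₂ := ⟨hxO₁, hunit₀⟩
    -- bound on the inverse
    set C₁ : ℝ := ‖Ring.inverse (Z x₀)‖ + 1 with hC₁
    have hC₁pos : 0 < C₁ := by positivity
    have hginv : ContinuousOn (fun y => Ring.inverse (Z y)) O₂ := by
      intro y hy
      have hcy : ContinuousAt Ring.inverse (Z y) := by
        have h9 := NormedRing.inverse_continuousAt hy.2.unit
        rwa [IsUnit.unit_spec] at h9
      exact hcy.comp_continuousWithinAt ((hZcont y hy.1).mono (fun z hz => hz.1))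
    set O₃ : Set (EucSp n) := O₂ ∩ (fun y => Ring.inverse (Z y)) ⁻¹' Metric.ball 0 C₁ with hO₃
    have hO₃open : IsOpen O₃ := hginv.isOpen_inter_preimage hO₂open Metric.isOpen_ball
    have hxO₃ : x₀ ∈ O₃ := by
      refine ⟨hxO₂, ?_⟩
      simp only [Set.mem_preimage, Metric.mem_ball, dist_zero_right, hC₁]
      linarith
    -- the chart conditions
    set O₄ : Set (EucSp n) := e.target ∩ e.symm ⁻¹' (φ ⁻¹' e.source) with hO₄
    have hO₄open : IsOpen O₄ := by
      apply (continuousOn_extChartAt_symm q).isOpen_inter_preimage (isOpen_extChartAt_target q)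
      exact (isOpen_extChartAt_source q).preimage hφs.continuous
    have hxO₄ : x₀ ∈ O₄ := by
      refine ⟨mem_extChartAt_target q, ?_⟩
      simp only [Set.mem_preimage, hsymm₀, hq']
      exact mem_extChartAt_source q
    set Ω : Set (EucSp n) := O₃ ∩ O₄ with hΩ
    have hΩopen : IsOpen Ω := hO₃open.inter hO₄open
    have hxΩ : x₀ ∈ Ω := ⟨hxO₃, hxO₄⟩
    -- key: the derivative of Φ intertwines Z
    have hkey : ∀ y ∈ Ω, ∃ D : EucSp n →L[ℝ] EucSp n,
        HasFDerivAt Φ D y ∧ ∀ u : EucSp n, D (Z y u) = Z (Φ y) u := by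
      intro y hy
      have hy1 : y ∈ e.target := hy.2.1
      have hy2 : φ (e.symm y) ∈ e.source := hy.2.2
      obtain ⟨D, hD, hDeq⟩ := key_fderiv n φ hφs q y hy1 hy2
      have hsymmΦ : e.symm (Φ y) = φ (e.symm y) := e.left_inv hy2
      refine ⟨D, hD, ?_⟩
      intro u
      rw [hZapp, hZapp, map_sum]
      refine Finset.sum_congr rfl ?_
      intro i _
      rw [map_smul]
      congr 1
      have h1 := hDeq (X i (e.symm y))
      rw [hmfd i (e.symm y)] at h1
      have hgen : ∀ z : M, z = φ (e.symm y) →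
          (tangentCoordChange (𝓡 n) z q z (X i z) : EucSp n)
            = tangentCoordChange (𝓡 n) (φ (e.symm y)) q (φ (e.symm y)) (X i (φ (e.symm y))) := by
        rintro z rfl
        rfl
      exact h1.trans (hgen _ hsymmΦ).symm
    -- Φ fixes x₀
    have hΦx₀ : Φ x₀ = x₀ := by
      show e (φ (e.symm x₀)) = x₀
      rw [hsymm₀, hq']
    -- Φ is continuous at x₀, choose a ball mapped into Ω
    have hΦcont : ContinuousAt Φ x₀ := by
      have h1 : ContinuousAt (e.symm) x₀ := continuousAt_extChartAt_symm q
      have h2 : ContinuousAt φ (e.symm x₀) := by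
        rw [hsymm₀]; exact hφs.continuous.continuousAt
      have h3 : ContinuousAt e (φ (e.symm x₀)) := by
        rw [hsymm₀, hq']; exact continuousAt_extChartAt q
      exact (h3.comp h2).comp h1
    have hN : Ω ∩ Φ ⁻¹' Ω ∈ 𝓝 x₀ := by
      refine Filter.inter_mem (hΩopen.mem_nhds hxΩ) ?_
      exact hΦcont.preimage_mem_nhds (by rw [hΦx₀] at *; exact hΩopen.mem_nhds hxΩ)
    obtain ⟨r, hr, hball⟩ := Metric.mem_nhds_iff.mp hN
    have hballΩ : Metric.ball x₀ r ⊆ Ω := fun z hz => (hball hz).1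
    have hballΦ : Metric.ball x₀ r ⊆ Φ ⁻¹' Ω := fun z hz => (hball hz).2
    -- MAIN ODE ARGUMENT: Φ fixes the ball
    have hfix : ∀ x ∈ Metric.ball x₀ r, Φ x = x := by
      intro x hx
      set w : EucSp n := x - x₀ with hw
      have hwr : ‖w‖ < r := by rwa [hw, ← mem_ball_iff_norm]
      set ℓ : ℝ → EucSp n := fun t => x₀ + t • w with hℓ
      have hℓmem : ∀ t ∈ Set.Icc (0:ℝ) 1, ℓ t ∈ Metric.ball x₀ r := by
        intro t ht
        rw [hℓ, Metric.mem_ball, dist_eq_norm]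
        simp only [add_sub_cancel_left, norm_smul, Real.norm_eq_abs]
        calc |t| * ‖w‖ ≤ 1 * ‖w‖ := by
              apply mul_le_mul_of_nonneg_right _ (norm_nonneg w)
              rw [abs_le]; constructor <;> linarith [ht.1, ht.2]
          _ < r := by rwa [one_mul]
      set c : ℝ → EucSp n := fun t => Ring.inverse (Z (ℓ t)) w with hc
      have hΩunit : ∀ y ∈ Ω, IsUnit (Z y) := fun y hy => hy.1.1.2
      have hΩbound : ∀ y ∈ Ω, ‖Ring.inverse (Z y)‖ ≤ C₁ := by
        intro y hy
        have := hy.1.2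
        simp only [Set.mem_preimage, Metric.mem_ball, dist_zero_right] at this
        linarith
      have hc_eq : ∀ t ∈ Set.Icc (0:ℝ) 1, Z (ℓ t) (c t) = w := by
        intro t ht
        rw [hc, ← ContinuousLinearMap.mul_apply,
          Ring.mul_inverse_cancel _ (hΩunit _ (hballΩ (hℓmem t ht))),
          ContinuousLinearMap.one_apply]
      have hc_norm : ∀ t ∈ Set.Icc (0:ℝ) 1, ‖c t‖ ≤ C₁ * r := by
        intro t ht
        calc ‖c t‖ ≤ ‖Ring.inverse (Z (ℓ t))‖ * ‖w‖ := ContinuousLinearMap.le_opNorm _ _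
          _ ≤ C₁ * r := by
            apply mul_le_mul (hΩbound _ (hballΩ (hℓmem t ht))) (le_of_lt hwr)
              (norm_nonneg w) (le_of_lt hC₁pos)
      set v : ℝ → EucSp n → EucSp n := fun t y => Z y (c t) with hv
      set sset : ℝ → Set (EucSp n) := fun t => if t ∈ Set.Icc (0:ℝ) 1 then Ω else ∅ with hsset
      set Kr : NNReal := Real.toNNReal (K * (C₁ * r)) with hKr
      have hlip : ∀ t, LipschitzOnWith Kr (v t) (sset t) := by
        intro t
        show LipschitzOnWith Kr (v t) (if t ∈ Set.Icc (0:ℝ) 1 then Ω else ∅)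
        by_cases ht : t ∈ Set.Icc (0:ℝ) 1
        · rw [if_pos ht]
          rw [lipschitzOnWith_iff_dist_le_mul]
          intro y₁ hy₁ y₂ hy₂
          have h1 : dist (v t y₁) (v t y₂) ≤ ‖Z y₁ - Z y₂‖ * ‖c t‖ := by
            rw [hv, dist_eq_norm, ← ContinuousLinearMap.sub_apply]
            exact ContinuousLinearMap.le_opNorm _ _
          have h2 : ‖Z y₁ - Z y₂‖ ≤ K * dist y₁ y₂ := by
            rw [← dist_eq_norm]
            exact lipschitzOnWith_iff_dist_le_mul.mp
              (hKlip₁.mono (fun z hz => hz.1.1.1)) y₁ hy₁ y₂ hy₂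
          have h3 : (Kr : ℝ) = K * (C₁ * r) := by
            rw [hKr, Real.coe_toNNReal]
            positivity
          rw [h3]
          calc dist (v t y₁) (v t y₂) ≤ (K * dist y₁ y₂) * (C₁ * r) := by
                apply h1.trans
                apply mul_le_mul h2 (hc_norm t ht) (norm_nonneg _)
                positivity
            _ = K * (C₁ * r) * dist y₁ y₂ := by ring
        · rw [if_neg ht]
          exact lipschitzOnWith_empty _ _
      set γ : ℝ → EucSp n := fun t => Φ (ℓ t) with hγ
      have hℓ' : ∀ t : ℝ, HasDerivAt ℓ w t := by
        intro t
        have : HasDerivAt (fun u : ℝ => u • w) ((1:ℝ) • w) t := (hasDerivAt_id t).smul_const w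
        have h2 := this.const_add x₀; rw [one_smul] at h2; exact h2
      have hγ' : ∀ t ∈ Set.Icc (0:ℝ) 1, HasDerivAt γ (v t (γ t)) t := by
        intro t ht
        obtain ⟨D, hD, hDeq⟩ := hkey (ℓ t) (hballΩ (hℓmem t ht))
        have hcmp := hD.comp_hasDerivAt t (hℓ' t)
        have h8 : D w = v t (γ t) := by
          rw [← hc_eq t ht, hDeq (c t)]
        rw [← h8]
        exact hcmp
      have hℓ'' : ∀ t ∈ Set.Icc (0:ℝ) 1, HasDerivAt ℓ (v t (ℓ t)) t := by
        intro t ht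
        have h8 : v t (ℓ t) = w := hc_eq t ht
        rw [h8]
        exact hℓ' t
      have heq : Set.EqOn γ ℓ (Set.Icc 0 1) := by
        apply ODE_solution_unique_of_mem_Icc_right (fun t _ => hlip t)
        · exact fun t ht => (hγ' t ht).continuousAt.continuousWithinAt
        · exact fun t ht => (hγ' t (Set.Ico_subset_Icc_self ht)).hasDerivWithinAt
        · intro t ht
          show γ t ∈ (if t ∈ Set.Icc (0:ℝ) 1 then Ω else ∅)
          rw [if_pos (Set.Ico_subset_Icc_self ht)]
          exact hballΦ (hℓmem t (Set.Ico_subset_Icc_self ht))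
        · exact fun t ht => (hℓ'' t ht).continuousAt.continuousWithinAt
        · exact fun t ht => (hℓ'' t (Set.Ico_subset_Icc_self ht)).hasDerivWithinAt
        · intro t ht
          show ℓ t ∈ (if t ∈ Set.Icc (0:ℝ) 1 then Ω else ∅)
          rw [if_pos (Set.Ico_subset_Icc_self ht)]
          exact hballΩ (hℓmem t (Set.Ico_subset_Icc_self ht))
        · show Φ (ℓ 0) = ℓ 0
          have h0 : ℓ 0 = x₀ := by simp [hℓ]
          rw [h0, hΦx₀]
      have h1 : γ 1 = ℓ 1 := heq (Set.mem_Icc.mpr ⟨zero_le_one, le_refl 1⟩)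
      have hℓ1 : ℓ 1 = x := by simp [hℓ, hw]
      rw [← hℓ1]
      exact h1
    -- conclude: A is a neighborhood of q
    have hmem : e.source ∩ e ⁻¹' (Metric.ball x₀ r) ∈ 𝓝 q := by
      refine Filter.inter_mem (extChartAt_source_mem_nhds q) ?_
      exact (continuousAt_extChartAt q).preimage_mem_nhds (Metric.ball_mem_nhds x₀ hr)
    refine Filter.mem_of_superset hmem ?_
    rintro m ⟨hm1, hm2⟩
    have hx : e m ∈ Metric.ball x₀ r := hm2
    have hΦm := hfix (e m) hx
    have hsymm_m : e.symm (e m) = m := e.left_inv hm1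
    have hφm_src : φ m ∈ e.source := by
      have h5 : φ (e.symm (e m)) ∈ e.source := (hballΩ hx).2.2
      rwa [hsymm_m] at h5
    have h6 : e (φ m) = e m := by
      have h7 : e (φ (e.symm (e m))) = e m := hΦm
      rwa [hsymm_m] at h7
    exact e.injOn hφm_src hm1 h6
  -- connectedness
  have hne : A.Nonempty := ⟨p, hp⟩
  have : A = Set.univ := IsClopen.eq_univ ⟨hclosed, hopen⟩ hne
  funext m
  have : m ∈ A := this ▸ Set.mem_univ m
  exact this
end
end
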